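/- For n even, the Möbius sparsity of the Odd-Max-Bit function OMB_n equals n; for n odd it equals n+1. Concretely, the Möbius support of OMB_n equals {{j, j+1, ..., n} : 1 ≤ j ≤ n} when n is even, and {{j, j+1, ..., n} : 1 ≤ j ≤ n} ∪ {∅} when n is odd. -/

import Mathlib

/-- `AND_S(x) = ∏_{i ∈ S} x_i` as a real number. -/
def andR {n : ℕ} (S : Finset (Fin n)) (x : Fin n → Bool) : ℝ :=
  ∏ i ∈ S, (if x i then (1 : ℝ) else 0)

/-- The Odd-Max-Bit function: `1` iff the maximal (1-indexed) position holding a `0` is odd,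
and `0` on the all-ones input. -/
def OMB (n : ℕ) (x : Fin n → Bool) : Bool :=
  decide (∃ i : Fin n, x i = false ∧ (i.val + 1) % 2 = 1 ∧ ∀ j : Fin n, i < j → x j = true)


namespace OMBaux

/-- suffix set -/
def suf (n j : ℕ) : Finset (Fin n) := Finset.univ.filter (fun i : Fin n => j ≤ i.val)

lemma mem_suf {n j : ℕ} {i : Fin n} : i ∈ suf n j ↔ j ≤ i.val := by
  simp [suf]

lemma suf_inj {n : ℕ} {j₁ j₂ : ℕ} (h₁ : j₁ < n) (h₂ : j₂ < n)
    (h : suf n j₁ = suf n j₂) : j₁ = j₂ := by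
  have a1 : (⟨j₁, h₁⟩ : Fin n) ∈ suf n j₁ := mem_suf.2 le_rfl
  have a2 : (⟨j₂, h₂⟩ : Fin n) ∈ suf n j₂ := mem_suf.2 le_rfl
  rw [h] at a1; rw [← h] at a2
  have b1 : j₂ ≤ j₁ := mem_suf.1 a1
  have b2 : j₁ ≤ j₂ := mem_suf.1 a2
  omega

lemma suf_nonempty {n j : ℕ} (h : j < n) : (suf n j).Nonempty :=
  ⟨⟨j, h⟩, mem_suf.2 le_rfl⟩

/-- the intended coefficients -/
noncomputable def d (n : ℕ) : Finset (Fin n) → ℝ := fun S =>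
  (if S = ∅ ∧ Odd n then 1 else 0) +
  ∑ j ∈ Finset.range n, if S = suf n j then (-1 : ℝ)^(j+1) else 0

lemma d_empty (n : ℕ) (hn : 0 < n) : d n ∅ = if Odd n then 1 else 0 := by
  unfold d
  rw [Finset.sum_eq_zero, add_zero]
  · simp
  · intro j hj
    rw [if_neg]
    intro h
    exact (suf_nonempty (Finset.mem_range.1 hj)).ne_empty h.symm

lemma d_suf (n : ℕ) {j : ℕ} (hj : j < n) : d n (suf n j) = (-1 : ℝ)^(j+1) := by
  unfold d
  rw [if_neg, zero_add, Finset.sum_eq_single j]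
  · simp
  · intro k hk hkj
    rw [if_neg]
    intro h
    exact hkj (suf_inj hj (Finset.mem_range.1 hk) h).symm
  · intro h; exact absurd (Finset.mem_range.2 hj) h
  · rintro ⟨h, -⟩
    exact (suf_nonempty hj).ne_empty h

lemma d_other (n : ℕ) {S : Finset (Fin n)} (h0 : S ≠ ∅)
    (h1 : ∀ j < n, S ≠ suf n j) : d n S = 0 := by
  unfold d
  rw [if_neg (by tauto), zero_add, Finset.sum_eq_zero]
  intro j hj
  exact if_neg (h1 j (Finset.mem_range.1 hj))

lemma andR_empty {n : ℕ} (x : Fin n → Bool) : andR ∅ x = 1 := by simp [andR]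

lemma andR_eq {n : ℕ} (S : Finset (Fin n)) (x : Fin n → Bool) :
    andR S x = if (∀ i ∈ S, x i = true) then 1 else 0 := by
  by_cases h : ∀ i ∈ S, x i = true
  · rw [if_pos h]
    exact Finset.prod_eq_one (fun i hi => by rw [h i hi]; simp)
  · rw [if_neg h]
    push_neg at h
    obtain ⟨i, hi, hxi⟩ := h
    exact Finset.prod_eq_zero hi (by simp [hxi])

/-- false-positions of x -/
def F {n : ℕ} (x : Fin n → Bool) : Finset (Fin n) :=
  Finset.univ.filter (fun i => x i = false)

lemma mem_F {n : ℕ} {x : Fin n → Bool} {i : Fin n} : i ∈ F x ↔ x i = false := by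
  simp [F]

lemma andR_suf {n : ℕ} (x : Fin n → Bool) (h : (F x).Nonempty) (j : ℕ) :
    andR (suf n j) x = if ((F x).max' h).val < j then 1 else 0 := by
  set k := (F x).max' h with hk
  rw [andR_eq]
  by_cases hj : k.val < j
  · rw [if_pos hj, if_pos]
    intro i hi
    have := mem_suf.1 hi
    by_contra hxi
    have hiF : i ∈ F x := mem_F.2 (by simpa using hxi)
    have := Finset.le_max' _ _ hiF
    have : i.val ≤ k.val := this
    omega
  · rw [if_neg hj, if_neg]
    intro hall
    have hkF : k ∈ F x := (F x).max'_mem h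
    have : x k = true := hall k (mem_suf.2 (by omega))
    rw [mem_F.1 hkF] at this
    exact absurd this (by simp)

lemma OMB_eq_false {n : ℕ} (x : Fin n → Bool) (h : F x = ∅) : OMB n x = false := by
  rw [OMB, decide_eq_false_iff_not]
  rintro ⟨i, hxi, -, -⟩
  have : i ∈ F x := mem_F.2 hxi
  rw [h] at this
  exact absurd this (Finset.notMem_empty i)

lemma OMB_eq {n : ℕ} (x : Fin n → Bool) (h : (F x).Nonempty) :
    OMB n x = decide ((((F x).max' h).val + 1) % 2 = 1) := by
  set k := (F x).max' h with hk
  rw [OMB]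
  by_cases hpar : (k.val + 1) % 2 = 1
  · rw [decide_eq_true hpar, decide_eq_true_iff]
    refine ⟨k, mem_F.1 ((F x).max'_mem h), hpar, ?_⟩
    intro j hj
    by_contra hxj
    have : j ∈ F x := mem_F.2 (by simpa using hxj)
    exact absurd (Finset.le_max' _ _ this) (not_le.2 hj)
  · rw [decide_eq_false hpar, decide_eq_false_iff_not]
    rintro ⟨i, hxi, hipar, hiall⟩
    have hiF : i ∈ F x := mem_F.2 hxi
    have hik : i ≤ k := Finset.le_max' _ _ hiF
    have hkF : k ∈ F x := (F x).max'_mem h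
    rcases lt_or_eq_of_le hik with hlt | heq
    · have := hiall k hlt
      rw [mem_F.1 hkF] at this
      exact absurd this (by simp)
    · exact hpar (heq ▸ hipar)

/-- main identity: OMB = Σ d S · andR S -/
lemma hf_d (n : ℕ) (hn : 0 < n) (x : Fin n → Bool) :
    (if OMB n x then (1 : ℝ) else 0) = ∑ S : Finset (Fin n), d n S * andR S x := by
  have expand : ∑ S : Finset (Fin n), d n S * andR S x =
      (if Odd n then (1:ℝ) else 0) +
      ∑ j ∈ Finset.range n, (-1 : ℝ)^(j+1) * andR (suf n j) x := by
    unfold d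
    rw [Finset.sum_congr rfl (fun S _ => add_mul (if S = ∅ ∧ Odd n then (1:ℝ) else 0) _ _),
      Finset.sum_add_distrib]
    congr 1
    · rw [Finset.sum_eq_single (∅ : Finset (Fin n))]
      · by_cases h : Odd n <;> simp [h, andR_empty]
      · intro S _ hS
        rw [if_neg (fun hc => hS hc.1), zero_mul]
      · simp
    · rw [Finset.sum_congr rfl (fun S _ => Finset.sum_mul (Finset.range n) _ (andR S x)),
        Finset.sum_comm]
      refine Finset.sum_congr rfl (fun j _ => ?_)
      rw [Finset.sum_eq_single (suf n j)]
      · rw [if_pos rfl]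
      · intro S _ hS; rw [if_neg hS, zero_mul]
      · simp
  rw [expand]
  rcases Finset.eq_empty_or_nonempty (F x) with hF | hF
  · -- all-true input
    rw [OMB_eq_false x hF, if_neg (by simp)]
    have : ∀ j ∈ Finset.range n, (-1 : ℝ)^(j+1) * andR (suf n j) x = -((-1:ℝ)^j) := by
      intro j hj
      have : andR (suf n j) x = 1 := by
        rw [andR_eq, if_pos]
        intro i _
        by_contra hxi
        have : i ∈ F x := mem_F.2 (by simpa using hxi)
        rw [hF] at this; exact absurd this (Finset.notMem_empty i)
      rw [this, mul_one, pow_succ, mul_neg_one]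
    rw [Finset.sum_congr rfl this, Finset.sum_neg_distrib, neg_one_geom_sum]
    rcases Nat.even_or_odd n with he | ho
    · simp [he, Nat.not_odd_iff_even.2 he]
    · simp [ho, Nat.not_even_iff_odd.2 ho]
  · -- max false position k
    set k := (F x).max' hF with hk
    rw [OMB_eq x hF]
    have hsum : ∑ j ∈ Finset.range n, (-1 : ℝ)^(j+1) * andR (suf n j) x =
        ∑ j ∈ Finset.Ico (k.val+1) n, -((-1:ℝ)^j) := by
      have step : ∀ j ∈ Finset.range n, (-1 : ℝ)^(j+1) * andR (suf n j) x =
          -(-1:ℝ)^j * (if k.val < j then 1 else 0) := by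
        intro j _
        rw [andR_suf x hF j, ← hk, pow_succ]
        ring
      rw [Finset.sum_congr rfl step]
      rw [← Finset.sum_filter_add_sum_filter_not (Finset.range n) (fun j => k.val < j)]
      have h1 : Finset.filter (fun j => k.val < j) (Finset.range n) = Finset.Ico (k.val+1) n := by
        ext j; simp [Finset.mem_Ico]; omega
      have h2 : ∑ j ∈ Finset.filter (fun j => ¬ k.val < j) (Finset.range n),
          (-(-1:ℝ)^j * if k.val < j then 1 else 0) = 0 := by
        refine Finset.sum_eq_zero (fun j hj => ?_)
        rw [if_neg (Finset.mem_filter.1 hj).2, mul_zero]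
      rw [h2, add_zero, h1]
      refine Finset.sum_congr rfl (fun j hj => ?_)
      have := Finset.mem_Ico.1 hj
      rw [if_pos (by omega : k.val < j), mul_one]
    rw [hsum, Finset.sum_neg_distrib,
      Finset.sum_Ico_eq_sub _ (by omega : k.val + 1 ≤ n), neg_one_geom_sum, neg_one_geom_sum]
    rcases Nat.even_or_odd n with h1 | h1 <;> rcases Nat.even_or_odd (k.val + 1) with h2 | h2 <;>
      simp only [Nat.even_iff, Nat.odd_iff] at h1 h2 <;>
      simp [Nat.odd_iff, Nat.even_iff, h1, h2, ← hk]

lemma andR_indicator {n : ℕ} (S T : Finset (Fin n)) :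
    andR S (fun i => decide (i ∈ T)) = if S ⊆ T then 1 else 0 := by
  rw [andR_eq]
  congr 1
  simp [Finset.subset_iff]

lemma sum_indicator {n : ℕ} (e : Finset (Fin n) → ℝ) (T : Finset (Fin n)) :
    ∑ S : Finset (Fin n), e S * andR S (fun i => decide (i ∈ T)) =
      ∑ S ∈ T.powerset, e S := by
  have : ∀ S : Finset (Fin n), e S * andR S (fun i => decide (i ∈ T)) =
      if S ⊆ T then e S else 0 := by
    intro S
    rw [andR_indicator]
    by_cases h : S ⊆ T <;> simp [h]
  rw [Finset.sum_congr rfl (fun S _ => this S), ← Finset.sum_filter]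
  congr 1
  ext S
  simp [Finset.mem_powerset]

lemma coeff_unique {n : ℕ} (c d : Finset (Fin n) → ℝ)
    (h : ∀ x, ∑ S : Finset (Fin n), c S * andR S x = ∑ S : Finset (Fin n), d S * andR S x) :
    c = d := by
  have key : ∀ T : Finset (Fin n), ∑ S ∈ T.powerset, c S = ∑ S ∈ T.powerset, d S := by
    intro T
    rw [← sum_indicator c T, ← sum_indicator d T]
    exact h _
  funext S
  induction S using Finset.strongInduction with
  | _ S ih =>
    have hS : S ∈ S.powerset := Finset.mem_powerset_self S
    have h1 := Finset.sum_eq_sum_sdiff_singleton_add hS c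
    have h2 := Finset.sum_eq_sum_sdiff_singleton_add hS d
    have h3 : ∑ T ∈ S.powerset \ {S}, c T = ∑ T ∈ S.powerset \ {S}, d T := by
      refine Finset.sum_congr rfl (fun T hT => ?_)
      obtain ⟨hT1, hT2⟩ := Finset.mem_sdiff.1 hT
      exact ih T (lt_of_le_of_ne (Finset.mem_powerset.1 hT1) (by simpa using hT2))
    have := key S
    rw [h1, h2, h3] at this
    linarith

end OMBaux

/-- The Möbius support of `OMB_n` consists exactly of the suffix sets `{j,…,n}` for
`j ∈ [n]` (together with `∅` when `n` is odd); consequently its Möbius sparsity is `n`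
for even `n` and `n+1` for odd `n`. -/
theorem stmt5 (n : ℕ) (hn : 0 < n) (c : Finset (Fin n) → ℝ)
    (hf : ∀ x, (if OMB n x then (1 : ℝ) else 0) = ∑ S : Finset (Fin n), c S * andR S x) :
    (Even n →
      ({S | c S ≠ 0} =
        {S | ∃ j < n, S = Finset.univ.filter (fun i : Fin n => j ≤ i.val)} ∧
      {S | c S ≠ 0}.ncard = n)) ∧
    (Odd n →
      ({S | c S ≠ 0} =
        insert ∅ {S | ∃ j < n, S = Finset.univ.filter (fun i : Fin n => j ≤ i.val)} ∧
      {S | c S ≠ 0}.ncard = n + 1)) := by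
  open OMBaux in
  have hcd : c = OMBaux.d n :=
    OMBaux.coeff_unique c (OMBaux.d n)
      (fun x => by rw [← hf x, OMBaux.hf_d n hn x])
  set A : Set (Finset (Fin n)) :=
    {S | ∃ j < n, S = Finset.univ.filter (fun i : Fin n => j ≤ i.val)} with hA
  have hAsuf : A = {S | ∃ j < n, S = OMBaux.suf n j} := by
    rw [hA]; rfl
  have hAcoe : A = ↑((Finset.range n).image (fun j => OMBaux.suf n j)) := by
    rw [hAsuf]
    ext S
    simp [eq_comm]
  have hAcard : A.ncard = n := by
    rw [hAcoe, Set.ncard_coe_finset, Finset.card_image_of_injOn, Finset.card_range]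
    intro j₁ h₁ j₂ h₂ h
    exact OMBaux.suf_inj (Finset.mem_range.1 h₁) (Finset.mem_range.1 h₂) h
  have hempty_notmem : (∅ : Finset (Fin n)) ∉ A := by
    rw [hAsuf]
    rintro ⟨j, hj, h⟩
    exact (OMBaux.suf_nonempty hj).ne_empty h.symm
  have hAfin : A.Finite := by
    rw [hAcoe]; exact Finset.finite_toSet _
  constructor
  · intro he
    have hsup : {S | c S ≠ 0} = A := by
      ext S
      simp only [Set.mem_setOf_eq, hcd]
      constructor
      · intro hne
        by_contra hSA
        rcases eq_or_ne S ∅ with rfl | hS0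
        · rw [OMBaux.d_empty n hn, if_neg (Nat.not_odd_iff_even.2 he)] at hne
          exact hne rfl
        · refine hne (OMBaux.d_other n hS0 ?_)
          intro j hj hSj
          exact hSA (hAsuf ▸ ⟨j, hj, hSj⟩)
      · intro hSA
        rw [hAsuf] at hSA
        obtain ⟨j, hj, rfl⟩ := hSA
        rw [OMBaux.d_suf n hj]
        positivity
    exact ⟨hsup, by rw [hsup, hAcard]⟩
  · intro ho
    have hsup : {S | c S ≠ 0} = insert ∅ A := by
      ext S
      simp only [Set.mem_setOf_eq, hcd, Set.mem_insert_iff]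
      constructor
      · intro hne
        rcases eq_or_ne S ∅ with rfl | hS0
        · exact Or.inl rfl
        · refine Or.inr ?_
          by_contra hSA
          refine hne (OMBaux.d_other n hS0 ?_)
          intro j hj hSj
          exact hSA (hAsuf ▸ ⟨j, hj, hSj⟩)
      · rintro (rfl | hSA)
        · rw [OMBaux.d_empty n hn, if_pos ho]
          norm_num
        · rw [hAsuf] at hSA
          obtain ⟨j, hj, rfl⟩ := hSA
          rw [OMBaux.d_suf n hj]
          positivity
    refine ⟨hsup, ?_⟩
    rw [hsup, Set.ncard_insert_of_notMem hempty_notmem hAfin, hAcard]
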